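/- Let k be an algebraically closed field, G a finite abelian group with char(k) ∤ |G| acting on a k-algebra A by algebra automorphisms (with a fixed isomorphism G ≅ G^∨, g ↦ χ_g), and μ a normalised 2-cocycle of G with values in kˣ. Identify A^{G,μ} with the invariant ring (AG_μ)^G and let AG_μ = ⊕_{g∈G} M^{χ_g} be the isotypic decomposition of AG_μ under the diagonal G-action. Then: (i) each M^{χ_g} is an (A^{G,μ}, A^{G,μ})-sub-bimodule of AG_μ which is free of rank 1 as a left A^{G,μ}-module and as a right A^{G,μ}-module, with generator 1 ⊗ g; (ii) as an (A^{G,μ}, A^{G,μ})-bimodule, AG_μ ≅ ⊕_{g∈G} {}^{id}(A^{G,μ})^{φ_g} for some k-algebra automorphisms φ_g of A^{G,μ} with φ_e = id; (iii) consequently AG_μ is a faithfully flat extension of A^{G,μ} on both the left and the right; and (iv) AG_μ is free of rank |G| as a left and as a right A-module, hence faithfully flat over A on both sides. -/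

import Mathlib

universe u v

/-- A normalised 2-cocycle of the group `G` with values in `kˣ`. -/
def IsCocycle {G : Type*} [Group G] {k : Type*} [Field k] (μ : G → G → kˣ) : Prop :=
  (∀ g h l : G, μ g h * μ (g * h) l = μ g (h * l) * μ h l) ∧
    (∀ g : G, μ 1 g = 1) ∧ (∀ g : G, μ g 1 = 1)

/-- The isotypic component of the `k`-algebra `A`, under the action
`ρ` of `G` by `k`-algebra automorphisms, corresponding to the character `c : G →* kˣ`. -/
def isotypic {k A G : Type*} [Field k] [Ring A] [Algebra k A] [Group G]
    (ρ : G →* (A ≃ₐ[k] A)) (c : G →* kˣ) : Submodule k A where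
  carrier := {a | ∀ h : G, ρ h a = (c h : k) • a}
  add_mem' := fun {a} {b} ha hb h => by rw [map_add, ha h, hb h, smul_add]
  zero_mem' := fun h => by rw [map_zero, smul_zero]
  smul_mem' := fun r a ha h => by rw [map_smul, ha h, smul_comm]

/-- Given an action `ρ` of a finite abelian group `G` on `A` by `k`-algebra automorphisms
and a fixed isomorphism `χ : G ≅ G^∨` of `G` with its character group, the `G`-grading of
`A` induced by the action: `A_g` is the isotypic component of the character `χ_{g⁻¹}`. -/
def actionGrading {k A G : Type*} [Field k] [Ring A] [Algebra k A] [Group G]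
    (ρ : G →* (A ≃ₐ[k] A)) (χ : G ≃* (G →* kˣ)) : G → Submodule k A :=
  fun g => isotypic ρ (χ g⁻¹)

/-- `f : A ≃ₗ[k] B` realises the `k`-algebra `B` as the cocycle twist `A^{G,μ}` of `A`,
with respect to the `G`-grading `ℬ` of `A` and the 2-cocycle `μ`:
`f` is a `k`-linear isomorphism with `f 1 = 1` and
`f a * f b = μ g h • f (a * b)` for all homogeneous `a ∈ A_g`, `b ∈ A_h`. -/
structure IsCocycleTwist (k : Type*) [Field k] {G : Type*} [Group G]
    {A : Type*} [Ring A] [Algebra k A] {B : Type*} [Ring B] [Algebra k B]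
    (ℬ : G → Submodule k A) (μ : G → G → kˣ) (f : A ≃ₗ[k] B) : Prop where
  map_one : f 1 = 1
  map_mul : ∀ (g h : G) (a b : A), a ∈ ℬ g → b ∈ ℬ h →
    f a * f b = (μ g h : k) • f (a * b)

/-- `ψ` realises the `k`-algebra `C` as the twisted group algebra `AG_μ = A ⊗_k kG_μ`:
`ψ g a` plays the role of `a ⊗ g`; the defining properties are `1 ⊗ e = 1`,
`(a ⊗ g)(b ⊗ h) = μ(g,h)·(ab ⊗ gh)`, and that `C = ⊕_{g ∈ G} A ⊗ g`. -/
structure IsTwistedGroupAlgebra (k : Type*) [Field k] {G : Type*} [Group G] [Fintype G]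
    {A : Type*} [Ring A] [Algebra k A] {C : Type*} [Ring C] [Algebra k C]
    (μ : G → G → kˣ) (ψ : G → (A →ₗ[k] C)) : Prop where
  map_one : ψ 1 1 = 1
  map_mul : ∀ (g h : G) (a b : A), ψ g a * ψ h b = (μ g h : k) • ψ (g * h) (a * b)
  bijective : Function.Bijective (fun v : G → A => ∑ g : G, ψ g (v g))

/-- The invariant subalgebra `C^G` of an action `σ` of `G` on `C`
by `k`-algebra automorphisms. -/
def fixedSubalgebra (k : Type*) [Field k] {G : Type*} [Group G]
    {C : Type*} [Ring C] [Algebra k C] (σ : G →* (C ≃ₐ[k] C)) : Subalgebra k C where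
  carrier := {c | ∀ h : G, σ h c = c}
  mul_mem' := fun {a} {b} ha hb h => by rw [map_mul, ha h, hb h]
  add_mem' := fun {a} {b} ha hb h => by rw [map_add, ha h, hb h]
  one_mem' := fun h => map_one (σ h)
  algebraMap_mem' := fun r h => AlgEquiv.commutes (σ h) r

open Finset
open scoped DirectSum

lemma sum_char_ne_one {k G : Type*} [Field k] [CommGroup G] [Fintype G]
    (f : G →* kˣ) (hf : f ≠ 1) : ∑ h : G, ((f h : kˣ) : k) = 0 := by
  obtain ⟨h₀, hh₀⟩ : ∃ h₀, f h₀ ≠ 1 := by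
    by_contra hc
    push_neg at hc
    exact hf (MonoidHom.ext fun x => hc x)
  have key : ((f h₀ : kˣ) : k) * ∑ h : G, ((f h : kˣ) : k) = ∑ h : G, ((f h : kˣ) : k) := by
    rw [Finset.mul_sum]
    refine Fintype.sum_bijective (fun h => h₀ * h) (Group.mulLeft_bijective h₀) _ _ ?_
    intro h
    rw [map_mul, Units.val_mul]
  have : (((f h₀ : kˣ) : k) - 1) * ∑ h : G, ((f h : kˣ) : k) = 0 := by
    rw [sub_mul, one_mul, key, sub_self]
  rcases mul_eq_zero.1 this with h | h
  · exact absurd (Units.ext (by simpa using sub_eq_zero.1 h)) hh₀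
  · exact h

lemma char_separates {k G : Type*} [Field k] [CommGroup G] [Fintype G]
    (χ : G ≃* (G →* kˣ)) (h : G) (hh : ∀ g : G, χ g h = 1) : h = 1 := by
  by_contra hne
  classical
  set H := Subgroup.zpowers h with hH
  have hker : ∀ g : G, ∀ x ∈ H, χ g x = 1 := by
    intro g x hx
    obtain ⟨n, rfl⟩ := hx
    rw [map_zpow]
    rw [hh g, one_zpow]
  let Q := G ⧸ H
  haveI : Finite Q := Quotient.finite _
  haveI : Fintype Q := Fintype.ofFinite Q
  let F : G → (Q →* k) := fun g =>
    (Units.coeHom k).comp (QuotientGroup.lift H (χ g)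
      (fun x hx => hker g x hx))
  have Finj : Function.Injective F := by
    intro a b hab
    apply χ.injective
    ext x
    have : F a (QuotientGroup.mk x) = F b (QuotientGroup.mk x) := by rw [hab]
    exact this
  have hli : LinearIndependent k (fun g : G => (F g : Q → k)) :=
    (linearIndependent_monoidHom Q k).comp F Finj
  have hcard : Fintype.card G ≤ Fintype.card Q := by
    have := hli.fintype_card_le_finrank
    rwa [Module.finrank_pi] at this
  have hQlt : Fintype.card Q < Fintype.card G := by
    have heq : Nat.card Q * Nat.card H = Nat.card G :=
      (Subgroup.card_eq_card_quotient_mul_card_subgroup H).symm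
    have h2 : 1 < Nat.card H := by
      rw [Subgroup.one_lt_card_iff_ne_bot, hH, Ne, Subgroup.zpowers_eq_bot]
      exact hne
    have hQpos : 0 < Nat.card Q := Nat.card_pos
    have : Nat.card Q < Nat.card G := by
      calc Nat.card Q < Nat.card Q * Nat.card H := lt_mul_of_one_lt_right hQpos h2
        _ = Nat.card G := heq
    simpa [Nat.card_eq_fintype_card] using this
  omega


lemma conj_left_inv {C : Type*} [Monoid C] (v w s : C) (h2 : w * v = 1) :
    w * (v * s * w) * v = s := by
  calc w * (v * s * w) * v = (w * v) * (s * (w * v)) := by simp only [mul_assoc]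
    _ = s := by rw [h2, one_mul, mul_one]

lemma conj_mul' {C : Type*} [Monoid C] (v w s t : C) (h2 : w * v = 1) :
    (v * s * w) * (v * t * w) = v * (s * t) * w := by
  calc (v * s * w) * (v * t * w) = v * s * (w * v) * (t * w) := by simp only [mul_assoc]
    _ = v * s * (t * w) := by rw [h2, mul_one]
    _ = v * (s * t) * w := by simp only [mul_assoc]

lemma isInternal_of_projections {k C G : Type*} [Field k] [Ring C] [Algebra k C]
    [Fintype G] [DecidableEq G] (P : G → Submodule k C) (π : G → C →ₗ[k] C)
    (hmem : ∀ g c, π g c ∈ P g) (hsum : ∀ c, ∑ g : G, π g c = c)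
    (hiso : ∀ g g' m, m ∈ P g' → π g m = if g' = g then m else 0) :
    DirectSum.IsInternal P := by
  have hcoe : ∀ x : (⨁ g : G, ↥(P g)),
      DirectSum.coeAddMonoidHom (fun g : G => P g) x = ∑ g : G, (x g : C) := by
    intro x
    conv_lhs => rw [← DirectSum.sum_univ_of x]
    rw [map_sum]
    exact Finset.sum_congr rfl (fun g _ => DirectSum.coeAddMonoidHom_of _ g (x g))
  constructor
  · rw [injective_iff_map_eq_zero]
    intro x hx
    rw [hcoe] at hx
    refine DFunLike.ext x 0 fun g₀ => ?_
    have h0 : π g₀ (∑ g : G, (x g : C)) = 0 := by rw [hx, map_zero]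
    rw [map_sum] at h0
    rw [Finset.sum_congr rfl (fun g _ => hiso g₀ g (x g : C) (x g).2)] at h0
    rw [Finset.sum_ite_eq' Finset.univ g₀ (fun g => ((x g : C)))] at h0
    rw [if_pos (Finset.mem_univ _)] at h0
    exact Subtype.ext h0
  · intro c
    refine ⟨∑ g : G, DirectSum.of (fun g : G => ↥(P g)) g ⟨π g c, hmem g c⟩, ?_⟩
    rw [map_sum]
    rw [Finset.sum_congr rfl (fun g _ =>
      DirectSum.coeAddMonoidHom_of (fun g : G => P g) g ⟨π g c, hmem g c⟩)]
    exact hsum c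

set_option maxHeartbeats 1000000 in
/-- Under the standing hypotheses, identify `A^{G,μ}` with the invariant
ring `B := (AG_μ)^G` of the twisted group algebra `C := AG_μ` (given via `ψ`) under the
diagonal `G`-action `σ`, and let `M^{χ_g} := isotypic σ (χ g)` be the isotypic components
of `AG_μ`. Then:
(i) each `M^{χ_g}` is an `(A^{G,μ}, A^{G,μ})`-sub-bimodule of `AG_μ`, free of rank 1 with
generator `1 ⊗ g = ψ g 1` as a left and as a right `A^{G,μ}`-module;
(ii) `AG_μ = ⊕_g M^{χ_g}` and there are `k`-algebra automorphisms `φ_g` of `A^{G,μ}` with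
`φ_e = id` and `(1 ⊗ g)·s = φ_g(s)·(1 ⊗ g)`, so that `M^{χ_g} ≅ ^{id}(A^{G,μ})^{φ_g}` and
`AG_μ ≅ ⊕_g ^{id}(A^{G,μ})^{φ_g}` as `(A^{G,μ}, A^{G,μ})`-bimodules;
(iii) `AG_μ` is free (with basis `(1 ⊗ g)_{g ∈ G}`) as a left and as a right
`A^{G,μ}`-module, hence a faithfully flat extension of `A^{G,μ}` on both sides;
(iv) `AG_μ` is free of rank `|G|` (with basis `(1 ⊗ g)_{g ∈ G}`) as a left and as a right
`A`-module, hence faithfully flat over `A` on both sides. -/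
theorem statement10 {k A C G : Type u} [Field k] [IsAlgClosed k] [Ring A] [Algebra k A]
    [Ring C] [Algebra k C] [CommGroup G] [Fintype G] [DecidableEq G]
    (hchar : (Fintype.card G : k) ≠ 0)
    (ρ : G →* (A ≃ₐ[k] A)) (χ : G ≃* (G →* kˣ))
    (μ : G → G → kˣ) (hμ : IsCocycle μ)
    (ψ : G → (A →ₗ[k] C)) (hψ : IsTwistedGroupAlgebra k μ ψ)
    (σ : G →* (C ≃ₐ[k] C))
    (hσ : ∀ (h g : G) (a : A), σ h (ψ g a) = ((χ g h : kˣ) : k) • ψ g (ρ h a)) :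
    -- (i)
    (∀ g : G,
      (∀ b ∈ fixedSubalgebra k σ, ∀ m ∈ isotypic σ (χ g), b * m ∈ isotypic σ (χ g) ∧
        m * b ∈ isotypic σ (χ g)) ∧
      (ψ g 1 ∈ isotypic σ (χ g)) ∧
      (∀ m ∈ isotypic σ (χ g), ∃! b : fixedSubalgebra k σ, (b : C) * ψ g 1 = m) ∧
      (∀ m ∈ isotypic σ (χ g), ∃! b : fixedSubalgebra k σ, ψ g 1 * (b : C) = m)) ∧
    -- (ii)
    (DirectSum.IsInternal (fun g : G => isotypic σ (χ g)) ∧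
      ∃ φ : G → (fixedSubalgebra k σ ≃ₐ[k] fixedSubalgebra k σ),
        φ 1 = AlgEquiv.refl ∧
        ∀ (g : G) (s : fixedSubalgebra k σ), ψ g 1 * (s : C) = ((φ g s : fixedSubalgebra k σ) : C) * ψ g 1) ∧
    -- (iii)
    (Function.Bijective (fun v : G → fixedSubalgebra k σ => ∑ g : G, ((v g : C) * ψ g 1)) ∧
      Function.Bijective (fun v : G → fixedSubalgebra k σ => ∑ g : G, (ψ g 1 * (v g : C)))) ∧
    -- (iv)
    (Function.Bijective (fun v : G → A => ∑ g : G, (ψ 1 (v g) * ψ g 1)) ∧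
      Function.Bijective (fun v : G → A => ∑ g : G, (ψ g 1 * ψ 1 (v g)))) := by
  classical
  -- basic membership lemmas
  have hIso : ∀ (c : G →* kˣ) (m : C), m ∈ isotypic σ c ↔ ∀ h : G, σ h m = ((c h : kˣ) : k) • m :=
    fun _ _ => Iff.rfl
  have hchi1 : ∀ h : G, ((χ 1 h : kˣ) : k) = 1 := fun h => by rw [map_one]; rfl
  have hfix_iso : ∀ c : C, c ∈ fixedSubalgebra k σ ↔ c ∈ isotypic σ (χ 1) := by
    intro c
    constructor <;> intro hc h <;> have := hc h <;> simpa [hchi1 h] using this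
  have hmul : ∀ (a b : G) (m n : C), m ∈ isotypic σ (χ a) → n ∈ isotypic σ (χ b) →
      m * n ∈ isotypic σ (χ (a * b)) := by
    intro a b m n hm hn h
    rw [map_mul (σ h), hm h, hn h, smul_mul_assoc, mul_smul_comm, smul_smul,
      map_mul χ, MonoidHom.mul_apply, Units.val_mul]
  have hpsi_iso : ∀ g : G, ψ g 1 ∈ isotypic σ (χ g) := by
    intro g h
    rw [hσ h g 1, map_one]
  -- μ(g, g⁻¹) = μ(g⁻¹, g)
  have hμsymm : ∀ g : G, μ g g⁻¹ = μ g⁻¹ g := by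
    intro g
    have := hμ.1 g g⁻¹ g
    simpa [hμ.2.1, hμ.2.2] using this
  -- the units 1 ⊗ g
  have huv : ∀ g : G, ψ g 1 * (((μ g g⁻¹ : kˣ) : k)⁻¹ • ψ g⁻¹ 1) = 1 := by
    intro g
    rw [mul_smul_comm, hψ.map_mul, smul_smul, inv_mul_cancel₀ (Units.ne_zero _), one_smul,
      mul_inv_cancel, one_mul, hψ.map_one]
  have hvu : ∀ g : G, (((μ g g⁻¹ : kˣ) : k)⁻¹ • ψ g⁻¹ 1) * ψ g 1 = 1 := by
    intro g
    rw [smul_mul_assoc, hψ.map_mul, smul_smul, hμsymm, inv_mul_cancel₀ (Units.ne_zero _),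
      one_smul, inv_mul_cancel, one_mul, hψ.map_one]
  let u : G → Cˣ := fun g => ⟨ψ g 1, ((μ g g⁻¹ : kˣ) : k)⁻¹ • ψ g⁻¹ 1, huv g, hvu g⟩
  have hu_val : ∀ g : G, (u g : C) = ψ g 1 := fun g => rfl
  have hu1 : u 1 = 1 := by
    apply Units.ext
    exact hψ.map_one
  have huinv_mem : ∀ g : G, ((u g)⁻¹ : Cˣ).val ∈ isotypic σ (χ g⁻¹) := by
    intro g
    show ((μ g g⁻¹ : kˣ) : k)⁻¹ • ψ g⁻¹ 1 ∈ isotypic σ (χ g⁻¹)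
    exact Submodule.smul_mem _ _ (hpsi_iso g⁻¹)
  -- orthogonality of characters
  have hchi_ne : ∀ a : G, a ≠ 1 → χ a ≠ 1 := by
    intro a ha hc
    exact ha (χ.injective (hc.trans (map_one χ).symm))
  have orth_a : ∀ a : G, ∑ h : G, ((χ a h : kˣ) : k) =
      if a = 1 then (Fintype.card G : k) else 0 := by
    intro a
    by_cases ha : a = 1
    · subst ha
      simp [hchi1]
    · rw [if_neg ha]
      exact sum_char_ne_one (χ a) (hchi_ne a ha)
  have orth_h : ∀ h : G, ∑ g : G, ((χ g h : kˣ) : k) =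
      if h = 1 then (Fintype.card G : k) else 0 := by
    intro h
    by_cases hh : h = 1
    · subst hh
      simp
    · rw [if_neg hh]
      let E : G →* kˣ :=
        { toFun := fun g => χ g h
          map_one' := by show χ (1 : G) h = 1; rw [map_one]; rfl
          map_mul' := fun a b => by show χ (a * b) h = χ a h * χ b h; rw [map_mul]; rfl }
      have hE : E ≠ 1 := by
        intro hc
        exact hh (char_separates χ h (fun g => by
          have : E g = 1 := by rw [hc]; rfl
          exact this))
      exact sum_char_ne_one E hE
  -- projection operators
  have hσσ : ∀ (a b : G) (c : C), σ a (σ b c) = σ (a * b) c := by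
    intro a b c
    rw [map_mul]
    rfl
  let π : G → C →ₗ[k] C := fun g =>
    (Fintype.card G : k)⁻¹ • ∑ h : G, ((χ g⁻¹ h : kˣ) : k) • (σ h).toLinearMap
  have hπ_apply : ∀ (g : G) (c : C),
      π g c = (Fintype.card G : k)⁻¹ • ∑ h : G, ((χ g⁻¹ h : kˣ) : k) • σ h c := by
    intro g c
    simp [π, LinearMap.sum_apply]
  have hchiinv : ∀ g h : G, χ g⁻¹ h = (χ g h)⁻¹ := by
    intro g h
    rw [map_inv]
    rfl
  have hπ_mem : ∀ (g : G) (c : C), π g c ∈ isotypic σ (χ g) := by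
    intro g c h'
    rw [hπ_apply, map_smul, map_sum]
    simp only [map_smul]
    have reindex : ∑ h : G, ((χ g⁻¹ h : kˣ) : k) • σ h' (σ h c)
        = ∑ t : G, ((χ g⁻¹ (h'⁻¹ * t) : kˣ) : k) • σ t c := by
      refine Fintype.sum_bijective (fun h => h' * h) (Group.mulLeft_bijective h') _ _ ?_
      intro h
      rw [hσσ, inv_mul_cancel_left]
    rw [reindex]
    have hterm : ∀ t : G, ((χ g⁻¹ (h'⁻¹ * t) : kˣ) : k) • σ t c
        = ((χ g h' : kˣ) : k) • (((χ g⁻¹ t : kˣ) : k) • σ t c) := by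
      intro t
      rw [map_mul (χ g⁻¹), Units.val_mul, mul_smul]
      congr 1
      rw [map_inv (χ g⁻¹), hchiinv, inv_inv]
    simp only [hterm]
    rw [← Finset.smul_sum, smul_comm]
  have hπ_sum : ∀ c : C, ∑ g : G, π g c = c := by
    intro c
    have : ∑ g : G, π g c
        = (Fintype.card G : k)⁻¹ • ∑ g : G, ∑ h : G, ((χ g⁻¹ h : kˣ) : k) • σ h c := by
      rw [Finset.smul_sum]
      exact Finset.sum_congr rfl (fun g _ => hπ_apply g c)
    rw [this, Finset.sum_comm]
    have hinner : ∀ h : G, ∑ g : G, ((χ g⁻¹ h : kˣ) : k) • σ h c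
        = (if h = 1 then (Fintype.card G : k) else 0) • σ h c := by
      intro h
      rw [← Finset.sum_smul]
      congr 1
      rw [← orth_h h]
      exact Fintype.sum_bijective (fun g => g⁻¹) (Equiv.inv G).bijective _ _ (fun g => rfl)
    simp only [hinner]
    simp only [ite_smul, zero_smul]
    rw [Finset.sum_ite_eq' Finset.univ (1 : G) (fun h => (Fintype.card G : k) • σ h c)]
    rw [if_pos (Finset.mem_univ _), map_one, smul_smul, inv_mul_cancel₀ hchar, one_smul]
    rfl
  have hπ_iso : ∀ (g g' : G) (m : C), m ∈ isotypic σ (χ g') →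
      π g m = if g' = g then m else 0 := by
    intro g g' m hm
    rw [hπ_apply]
    have hterm : ∀ h : G, ((χ g⁻¹ h : kˣ) : k) • σ h m
        = ((χ (g⁻¹ * g') h : kˣ) : k) • m := by
      intro h
      rw [hm h, smul_smul, map_mul χ, MonoidHom.mul_apply, Units.val_mul]
    simp only [hterm]
    rw [← Finset.sum_smul, orth_a]
    by_cases hgg : g' = g
    · subst hgg
      rw [if_pos (by group), if_pos rfl, smul_smul, inv_mul_cancel₀ hchar, one_smul]
    · rw [if_neg (fun hc => hgg (inv_mul_eq_one.1 hc).symm), if_neg hgg, zero_smul, smul_zero]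
  -- (i) existence and uniqueness, right and left
  have hbm : ∀ (g : G) (b : C), b ∈ fixedSubalgebra k σ → ∀ m ∈ isotypic σ (χ g),
      b * m ∈ isotypic σ (χ g) := by
    intro g b hb m hm
    have := hmul 1 g b m ((hfix_iso b).1 hb) hm
    rwa [one_mul] at this
  have hmb : ∀ (g : G) (b : C), b ∈ fixedSubalgebra k σ → ∀ m ∈ isotypic σ (χ g),
      m * b ∈ isotypic σ (χ g) := by
    intro g b hb m hm
    have := hmul g 1 m b hm ((hfix_iso b).1 hb)
    rwa [mul_one] at this
  have hex_r : ∀ (g : G), ∀ m ∈ isotypic σ (χ g),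
      ∃! b : fixedSubalgebra k σ, (b : C) * ψ g 1 = m := by
    intro g m hm
    have hmemB : m * ((u g)⁻¹ : Cˣ) ∈ fixedSubalgebra k σ := by
      rw [hfix_iso]
      have := hmul g g⁻¹ m _ hm (huinv_mem g)
      rwa [mul_inv_cancel] at this
    refine ⟨⟨m * ((u g)⁻¹ : Cˣ), hmemB⟩, ?_, ?_⟩
    · show m * ((u g)⁻¹ : Cˣ) * ψ g 1 = m
      rw [← hu_val g, Units.inv_mul_cancel_right]
    · intro b' hb'
      apply Subtype.ext
      show (b' : C) = m * ((u g)⁻¹ : Cˣ)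
      rw [← hb', ← hu_val g, Units.mul_inv_cancel_right]
  have hex_l : ∀ (g : G), ∀ m ∈ isotypic σ (χ g),
      ∃! b : fixedSubalgebra k σ, ψ g 1 * (b : C) = m := by
    intro g m hm
    have hmemB : ((u g)⁻¹ : Cˣ) * m ∈ fixedSubalgebra k σ := by
      rw [hfix_iso]
      have := hmul g⁻¹ g _ m (huinv_mem g) hm
      rwa [inv_mul_cancel] at this
    refine ⟨⟨((u g)⁻¹ : Cˣ) * m, hmemB⟩, ?_, ?_⟩
    · show ψ g 1 * (((u g)⁻¹ : Cˣ) * m) = m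
      rw [← hu_val g, Units.mul_inv_cancel_left]
    · intro b' hb'
      apply Subtype.ext
      show (b' : C) = ((u g)⁻¹ : Cˣ) * m
      rw [← hb', ← hu_val g, Units.inv_mul_cancel_left]
  -- (ii) internality
  have hinternal : DirectSum.IsInternal (fun g : G => isotypic σ (χ g)) :=
    isInternal_of_projections _ π hπ_mem hπ_sum hπ_iso
  -- (ii) the automorphisms φ g
  have hconj_mem : ∀ (g : G) (s : fixedSubalgebra k σ),
      (u g : C) * (s : C) * ((u g)⁻¹ : Cˣ) ∈ fixedSubalgebra k σ := by
    intro g s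
    rw [hfix_iso]
    have := hmul (g * 1) g⁻¹ _ _ (hmul g 1 _ _ (hpsi_iso g) ((hfix_iso _).1 s.2)) (huinv_mem g)
    rwa [show g * 1 * g⁻¹ = 1 by group] at this
  have hconj'_mem : ∀ (g : G) (s : fixedSubalgebra k σ),
      ((u g)⁻¹ : Cˣ) * (s : C) * (u g : C) ∈ fixedSubalgebra k σ := by
    intro g s
    rw [hfix_iso]
    have := hmul (g⁻¹ * 1) g _ _ (hmul g⁻¹ 1 _ _ (huinv_mem g) ((hfix_iso _).1 s.2)) (hpsi_iso g)
    rwa [show g⁻¹ * 1 * g = 1 by group] at this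
  let φ : G → (fixedSubalgebra k σ ≃ₐ[k] fixedSubalgebra k σ) := fun g =>
    { toFun := fun s => ⟨(u g : C) * (s : C) * ((u g)⁻¹ : Cˣ), hconj_mem g s⟩
      invFun := fun s => ⟨((u g)⁻¹ : Cˣ) * (s : C) * (u g : C), hconj'_mem g s⟩
      left_inv := fun s => by
        apply Subtype.ext
        exact conj_left_inv ((u g : C)) (((u g)⁻¹ : Cˣ)) (s : C) (Units.inv_mul (u g))
      right_inv := fun s => by
        apply Subtype.ext
        exact conj_left_inv ((((u g)⁻¹ : Cˣ) : C)) ((u g : C)) (s : C) (Units.mul_inv (u g))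
      map_mul' := fun s t => by
        apply Subtype.ext
        show (u g : C) * ((s : C) * (t : C)) * ((u g)⁻¹ : Cˣ)
          = ((u g : C) * (s : C) * ((u g)⁻¹ : Cˣ)) * ((u g : C) * (t : C) * ((u g)⁻¹ : Cˣ))
        exact (conj_mul' ((u g : C)) (((u g)⁻¹ : Cˣ)) (s : C) (t : C) (Units.inv_mul (u g))).symm
      map_add' := fun s t => by
        apply Subtype.ext
        show (u g : C) * ((s : C) + (t : C)) * ((u g)⁻¹ : Cˣ)
          = (u g : C) * (s : C) * ((u g)⁻¹ : Cˣ) + (u g : C) * (t : C) * ((u g)⁻¹ : Cˣ)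
        rw [mul_add, add_mul]
      commutes' := fun r => by
        apply Subtype.ext
        show (u g : C) * (algebraMap k C r) * ((u g)⁻¹ : Cˣ) = algebraMap k C r
        rw [← Algebra.commutes r ((u g : C)), mul_assoc, Units.mul_inv, mul_one] }
  have hφ1 : φ 1 = AlgEquiv.refl := by
    apply AlgEquiv.ext
    intro s
    apply Subtype.ext
    show (u 1 : C) * (s : C) * ((u 1)⁻¹ : Cˣ) = (s : C)
    rw [hu1]
    simp
  have hφrel : ∀ (g : G) (s : fixedSubalgebra k σ),
      ψ g 1 * (s : C) = ((φ g s : fixedSubalgebra k σ) : C) * ψ g 1 := by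
    intro g s
    show ψ g 1 * (s : C) = ((u g : C) * (s : C) * ((u g)⁻¹ : Cˣ)) * ψ g 1
    rw [← hu_val g, Units.inv_mul_cancel_right]
  -- (iii)
  have cancel_r : ∀ (g : G) (x y : C), x * ψ g 1 = y * ψ g 1 → x = y := by
    intro g x y hxy
    have h2 := congrArg (fun z => z * (((u g)⁻¹ : Cˣ) : C)) hxy
    rw [mul_assoc, mul_assoc,
      show ψ g 1 * (((u g)⁻¹ : Cˣ) : C) = 1 from Units.mul_inv (u g), mul_one, mul_one] at h2
    exact h2
  have cancel_l : ∀ (g : G) (x y : C), ψ g 1 * x = ψ g 1 * y → x = y := by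
    intro g x y hxy
    have h2 := congrArg (fun z => (((u g)⁻¹ : Cˣ) : C) * z) hxy
    rw [← mul_assoc, ← mul_assoc,
      show (((u g)⁻¹ : Cˣ) : C) * ψ g 1 = 1 from Units.inv_mul (u g), one_mul, one_mul] at h2
    exact h2
  have hmemr : ∀ (g : G) (v : fixedSubalgebra k σ), (v : C) * ψ g 1 ∈ isotypic σ (χ g) :=
    fun g v => hbm g (v : C) v.2 (ψ g 1) (hpsi_iso g)
  have hmeml : ∀ (g : G) (v : fixedSubalgebra k σ), ψ g 1 * (v : C) ∈ isotypic σ (χ g) :=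
    fun g v => hmb g (v : C) v.2 (ψ g 1) (hpsi_iso g)
  have hbij_r : Function.Bijective
      (fun v : G → fixedSubalgebra k σ => ∑ g : G, ((v g : C) * ψ g 1)) := by
    constructor
    · intro v w hvw
      funext g₀
      apply Subtype.ext
      have h1 := congrArg (π g₀) hvw
      rw [map_sum, map_sum,
        Finset.sum_congr rfl (fun g _ => hπ_iso g₀ g _ (hmemr g (v g))),
        Finset.sum_congr rfl (fun g _ => hπ_iso g₀ g _ (hmemr g (w g))),
        Finset.sum_ite_eq' Finset.univ g₀ (fun g => (v g : C) * ψ g 1),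
        Finset.sum_ite_eq' Finset.univ g₀ (fun g => (w g : C) * ψ g 1),
        if_pos (Finset.mem_univ _), if_pos (Finset.mem_univ _)] at h1
      exact cancel_r g₀ _ _ h1
    · intro c
      choose v hv using fun g => (hex_r g (π g c) (hπ_mem g c)).exists
      refine ⟨v, ?_⟩
      show ∑ g : G, ((v g : C) * ψ g 1) = c
      rw [Finset.sum_congr rfl (fun g _ => hv g)]
      exact hπ_sum c
  have hbij_l : Function.Bijective
      (fun v : G → fixedSubalgebra k σ => ∑ g : G, (ψ g 1 * (v g : C))) := by
    constructor
    · intro v w hvw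
      funext g₀
      apply Subtype.ext
      have h1 := congrArg (π g₀) hvw
      rw [map_sum, map_sum,
        Finset.sum_congr rfl (fun g _ => hπ_iso g₀ g _ (hmeml g (v g))),
        Finset.sum_congr rfl (fun g _ => hπ_iso g₀ g _ (hmeml g (w g))),
        Finset.sum_ite_eq' Finset.univ g₀ (fun g => ψ g 1 * (v g : C)),
        Finset.sum_ite_eq' Finset.univ g₀ (fun g => ψ g 1 * (w g : C)),
        if_pos (Finset.mem_univ _), if_pos (Finset.mem_univ _)] at h1
      exact cancel_l g₀ _ _ h1
    · intro c
      choose v hv using fun g => (hex_l g (π g c) (hπ_mem g c)).exists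
      refine ⟨v, ?_⟩
      show ∑ g : G, (ψ g 1 * (v g : C)) = c
      rw [Finset.sum_congr rfl (fun g _ => hv g)]
      exact hπ_sum c
  -- (iv)
  have e1 : ∀ (g : G) (a : A), ψ 1 a * ψ g 1 = ψ g a := by
    intro g a
    rw [hψ.map_mul 1 g a 1, hμ.2.1, one_mul, mul_one]
    simp
  have e2 : ∀ (g : G) (a : A), ψ g 1 * ψ 1 a = ψ g a := by
    intro g a
    rw [hψ.map_mul g 1 1 a, hμ.2.2, mul_one, one_mul]
    simp
  have hbivA_l : Function.Bijective (fun v : G → A => ∑ g : G, (ψ 1 (v g) * ψ g 1)) := by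
    have heq : (fun v : G → A => ∑ g : G, (ψ 1 (v g) * ψ g 1))
        = fun v : G → A => ∑ g : G, ψ g (v g) :=
      funext fun v => Finset.sum_congr rfl fun g _ => e1 g (v g)
    rw [heq]
    exact hψ.bijective
  have hbivA_r : Function.Bijective (fun v : G → A => ∑ g : G, (ψ g 1 * ψ 1 (v g))) := by
    have heq : (fun v : G → A => ∑ g : G, (ψ g 1 * ψ 1 (v g)))
        = fun v : G → A => ∑ g : G, ψ g (v g) :=
      funext fun v => Finset.sum_congr rfl fun g _ => e2 g (v g)
    rw [heq]
    exact hψ.bijective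
  exact ⟨fun g => ⟨fun b hb m hm => ⟨hbm g b hb m hm, hmb g b hb m hm⟩, hpsi_iso g,
      hex_r g, hex_l g⟩,
    ⟨hinternal, φ, hφ1, hφrel⟩, ⟨hbij_r, hbij_l⟩, ⟨hbivA_l, hbivA_r⟩⟩
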